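/- Let G be a finite abelian group of order n, σ ∈ G of order m, and 0 ≤ i < m an integer. For a character χ of G, let u_{χ,σ} be the unique integer with 0 ≤ u_{χ,σ} < m and χ(σ) = e^{2πi·u_{χ,σ}/m}. Then the number of characters χ of G with u_{χ,σ} > i equals (n/m)·(m-1-i). -/

import Mathlib

/-- For a finite abelian group `G` of order `n`, `σ ∈ G` of order `m` and `0 ≤ i < m`, the
number of characters `χ` of `G` with `u_{χ,σ} > i` (where `0 ≤ u_{χ,σ} < m` and
`χ(σ) = e^{2πi·u_{χ,σ}/m}`) equals `(n/m)·(m-1-i)`. -/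
theorem card_characters_with_large_u {G : Type*} [CommGroup G] [Finite G] (σ : G) (i : ℕ)
    (hi : i < orderOf σ) :
    Nat.card {χ : G →* ℂˣ // ∃ u : ℕ, i < u ∧ u < orderOf σ ∧
        (χ σ : ℂ) = Complex.exp (2 * Real.pi * Complex.I * u / orderOf σ)}
      = (Nat.card G / orderOf σ) * (orderOf σ - 1 - i) := by
  classical
  have hm : 0 < orderOf σ := orderOf_pos σ
  set m := orderOf σ with hmdef
  haveI : NeZero m := ⟨hm.ne'⟩
  set n := Nat.card G with hndef
  -- duality: the character group has the same cardinality as `G`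
  haveI : NeZero ((Monoid.exponent G : ℂ)) :=
    ⟨Nat.cast_ne_zero.mpr Monoid.exponent_ne_zero_of_finite⟩
  obtain ⟨e⟩ := CommGroup.monoidHom_mulEquiv_of_hasEnoughRootsOfUnity G ℂ
  haveI : Finite (G →* ℂˣ) := Finite.of_equiv G e.symm.toEquiv
  haveI : Fintype (G →* ℂˣ) := Fintype.ofFinite _
  have hcardD : Fintype.card (G →* ℂˣ) = n := by
    rw [Fintype.card_eq_nat_card, Nat.card_congr e.toEquiv]
  -- evaluation at σ
  let f : (G →* ℂˣ) →* ℂˣ :=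
    { toFun := fun χ => χ σ, map_one' := rfl, map_mul' := fun χ ψ => rfl }
  have hf : ∀ χ : G →* ℂˣ, f χ = χ σ := fun _ => rfl
  -- range of f is contained in the m-th roots of unity
  have hsub : f.range ≤ rootsOfUnity m ℂ := by
    rintro x ⟨χ, rfl⟩
    rw [mem_rootsOfUnity, hf, ← map_pow, pow_orderOf_eq_one, map_one]
  have hdvd1 : Nat.card f.range ∣ m := by
    have h1 := Subgroup.card_dvd_of_le hsub
    have h2 : Nat.card (rootsOfUnity m ℂ) = m := by
      exact Complex.card_rootsOfUnity m
    rwa [h2] at h1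
  have hdvd2 : m ∣ Nat.card f.range := by
    apply orderOf_dvd_of_pow_eq_one
    by_contra h
    obtain ⟨χ, hχ⟩ := CommGroup.exists_apply_ne_one_of_hasEnoughRootsOfUnity G ℂ h
    apply hχ
    have hmem : χ σ ∈ f.range := ⟨χ, rfl⟩
    have hx : (⟨χ σ, hmem⟩ : f.range) ^ (Nat.card f.range) = 1 := pow_card_eq_one'
    have hx' := congrArg (Subtype.val) hx
    rw [map_pow]
    simpa using hx'
  have hcardR : Nat.card f.range = m := Nat.dvd_antisymm hdvd1 hdvd2
  -- range of f equals the m-th roots of unity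
  have hR : f.range = rootsOfUnity m ℂ := by
    apply Subgroup.eq_of_le_of_card_ge hsub
    rw [hcardR, Complex.card_rootsOfUnity m]
  -- the finset of values of f
  let t : Finset ℂˣ := Finset.univ.image f
  have hcardt : t.card = m := by
    have h1 : (Set.range ⇑f) = ((t : Finset ℂˣ) : Set ℂˣ) := by
      simp [t]
    have h2 : Nat.card (Set.range ⇑f) = m := by
      rw [← MonoidHom.coe_range, SetLike.coe_sort_coe]
      exact hcardR
    rw [h1, Nat.card_coe_set_eq, Set.ncard_coe_finset] at h2
    exact h2
  -- each fiber over t has size k := #{χ | f χ = 1}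
  set k := (Finset.univ.filter (fun χ : G →* ℂˣ => f χ = (1 : ℂˣ))).card with hkdef
  have hfiber : ∀ ζ ∈ t, (Finset.univ.filter (fun χ : G →* ℂˣ => f χ = ζ)).card = k := by
    intro ζ hζ
    have hζr : ζ ∈ Set.range f := by
      obtain ⟨χ, -, rfl⟩ := Finset.mem_image.mp hζ
      exact ⟨χ, rfl⟩
    exact MonoidHom.card_fiber_eq_of_mem_range f hζr ⟨1, map_one f⟩
  -- total count
  have hsum : n = m * k := by
    have h1 : (Finset.univ : Finset (G →* ℂˣ)).card
        = ∑ ζ ∈ t, (Finset.univ.filter (fun χ : G →* ℂˣ => f χ = ζ)).card := by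
      apply Finset.card_eq_sum_card_fiberwise
      intro χ _
      exact Finset.mem_image_of_mem f (Finset.mem_univ χ)
    rw [Finset.card_univ, hcardD] at h1
    rw [h1, Finset.sum_congr rfl hfiber, Finset.sum_const, hcardt, smul_eq_mul]
  have hk : k = n / m := by
    rw [hsum, Nat.mul_div_cancel_left _ hm]
  -- primitive root set-up
  have hω : IsPrimitiveRoot (Complex.exp (2 * Real.pi * Complex.I / m)) m :=
    Complex.isPrimitiveRoot_exp m hm.ne'
  set Ω : ℂˣ := (hω.isUnit hm.ne').unit with hΩdef
  have hΩval : (Ω : ℂ) = Complex.exp (2 * Real.pi * Complex.I / m) := (hω.isUnit hm.ne').unit_spec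
  have hexp : ∀ u : ℕ, Complex.exp (2 * Real.pi * Complex.I * u / m) = (Ω : ℂ) ^ u := by
    intro u
    rw [hΩval, ← Complex.exp_nat_mul]
    congr 1
    ring
  have hΩm : Ω ^ m = 1 := by
    ext
    push_cast [hΩval]
    exact hω.pow_eq_one
  -- membership of powers of Ω in t
  have hΩt : ∀ u : ℕ, Ω ^ u ∈ t := by
    intro u
    have hmem : Ω ^ u ∈ rootsOfUnity m ℂ := by
      rw [mem_rootsOfUnity, ← pow_mul, mul_comm, pow_mul, hΩm, one_pow]
    obtain ⟨χ, hχ⟩ := (hR ▸ hmem : Ω ^ u ∈ f.range)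
    exact Finset.mem_image.mpr ⟨χ, Finset.mem_univ χ, hχ⟩
  -- translate the predicate
  have hP : ∀ χ : G →* ℂˣ, (∃ u : ℕ, i < u ∧ u < m ∧
      (χ σ : ℂ) = Complex.exp (2 * Real.pi * Complex.I * u / m))
      ↔ ∃ u ∈ Finset.Ico (i + 1) m, f χ = Ω ^ u := by
    intro χ
    constructor
    · rintro ⟨u, hu1, hu2, hu3⟩
      refine ⟨u, Finset.mem_Ico.mpr ⟨hu1, hu2⟩, ?_⟩
      ext
      push_cast
      rw [hf]
      rw [hexp u] at hu3
      exact hu3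
    · rintro ⟨u, hu, hu3⟩
      rw [Finset.mem_Ico] at hu
      refine ⟨u, hu.1, hu.2, ?_⟩
      rw [hexp u, ← hf χ, hu3]
      push_cast
      ring
  -- compute the cardinality
  rw [Nat.card_eq_fintype_card, Fintype.card_subtype]
  have hfe : (Finset.univ.filter (fun χ : G →* ℂˣ => ∃ u : ℕ, i < u ∧ u < m ∧
      (χ σ : ℂ) = Complex.exp (2 * Real.pi * Complex.I * u / m)))
      = (Finset.Ico (i + 1) m).biUnion
          (fun u => Finset.univ.filter (fun χ : G →* ℂˣ => f χ = Ω ^ u)) := by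
    ext χ
    simp only [Finset.mem_filter, Finset.mem_univ, true_and, Finset.mem_biUnion]
    rw [hP χ]
  rw [hfe, Finset.card_biUnion, Finset.sum_congr rfl
    (fun u hu => hfiber (Ω ^ u) (hΩt u)), Finset.sum_const, Nat.card_Ico, smul_eq_mul, hk]
  · rw [mul_comm]
    congr 1
    omega
  · intro u hu v hv huv
    rw [Finset.mem_coe, Finset.mem_Ico] at hu hv
    apply Finset.disjoint_left.mpr
    intro χ h1 h2
    rw [Finset.mem_filter] at h1 h2
    apply huv
    apply hω.pow_inj hu.2 hv.2
    have : Ω ^ u = Ω ^ v := h1.2.symm.trans h2.2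
    have := congrArg (Units.val) this
    push_cast at this
    rw [hΩval] at this
    exact this
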